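/- arXiv:2109.12374 — 4 statements merged into one kernel-verified Lean document; each statement's English description precedes it below -/
import Mathlib

section
/- Assume p_0 = 0 and p_1 > 0. Let f(s) = ∑_{j≥1} p_j s^j and f_n(s) = E[s^{Z_n}] for 0 ≤ s < 1. Then for every s ∈ [0,1) the limit Q(s) := lim_{n→∞} f_n(s)/p_1^n exists and is finite, and the function Q so defined satisfies Q(0) = 0, Q(s) < ∞ for 0 ≤ s < 1, and the functional equation Q(f(s)) = p_1 Q(s) for all 0 ≤ s < 1. (Lemma 6.1, due to Athreya.) -/
open MeasureTheory ProbabilityTheory Filter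

lemma aux_integral_prod {Ω : Type*} [MeasurableSpace Ω] {P : Measure Ω} [IsProbabilityMeasure P]
    {ι : Type*} (f : ι → Ω → ℝ)
    (hindep : iIndepFun f P)
    (hmeas : ∀ i, Measurable (f i)) (hint : ∀ i, Integrable (f i) P) (s : Finset ι) :
    Integrable (fun ω => ∏ i ∈ s, f i ω) P ∧
      ∫ ω, ∏ i ∈ s, f i ω ∂P = ∏ i ∈ s, ∫ ω, f i ω ∂P := by
  classical
  induction' s using Finset.induction_on with i s hi ih
  · simp
  · have hip : IndepFun (fun ω => ∏ j ∈ s, f j ω) (f i) P := by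
      have h0 := hindep.indepFun_finsetProd_of_notMem hmeas hi (s := s) (i := i)
      have he : (∏ j ∈ s, f j) = fun ω => ∏ j ∈ s, f j ω := by funext ω; simp
      rwa [he] at h0
    have h1 : Integrable (fun ω => (∏ j ∈ s, f j ω) * f i ω) P :=
      hip.integrable_mul ih.1 (hint i)
    constructor
    · simpa [Finset.prod_insert hi, mul_comm] using h1
    · have h2 := hip.integral_mul_eq_mul_integral ih.1.aestronglyMeasurable (hint i).aestronglyMeasurable
      simp only [Finset.prod_insert hi]
      have h3 : ∫ ω, f i ω * ∏ j ∈ s, f j ω ∂P = (∫ ω, f i ω ∂P) * ∫ ω, ∏ j ∈ s, f j ω ∂P := by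
        simpa [mul_comm] using h2
      rw [h3, ih.2]

lemma aux_int_pow {Ω : Type*} [MeasurableSpace Ω] (P : Measure Ω) [IsProbabilityMeasure P]
    (W : Ω → ℕ) (hW : Measurable W) (t : ℝ) (ht0 : 0 ≤ t) (ht1 : t ≤ 1) :
    Integrable (fun ω => t ^ W ω) P ∧
    ∫ ω, t ^ W ω ∂P = ∑' k : ℕ, (P {ω | W ω = k}).toReal * t ^ k := by
  have hmp : Measurable (fun x : ℕ => t ^ x) := measurable_from_top
  have hmeas : Measurable (fun ω => t ^ W ω) := hmp.comp hW
  have hbd : ∀ ω, ‖t ^ W ω‖ ≤ 1 := fun ω => by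
    rw [Real.norm_eq_abs, abs_of_nonneg (pow_nonneg ht0 _)]
    exact pow_le_one₀ ht0 ht1
  have hint : Integrable (fun ω => t ^ W ω) P :=
    (integrable_const 1).mono' hmeas.aestronglyMeasurable (Filter.Eventually.of_forall hbd)
  refine ⟨hint, ?_⟩
  have : IsProbabilityMeasure (P.map W) := Measure.isProbabilityMeasure_map hW.aemeasurable
  have hint' : Integrable (fun k : ℕ => t ^ k) (P.map W) :=
    (integrable_const 1).mono' hmp.aestronglyMeasurable (Filter.Eventually.of_forall fun k => by
      rw [Real.norm_eq_abs, abs_of_nonneg (pow_nonneg ht0 _)]; exact pow_le_one₀ ht0 ht1)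
  rw [← integral_map hW.aemeasurable hmp.aestronglyMeasurable, integral_countable' hint']
  congr 1; funext k
  rw [measureReal_def, Measure.map_apply hW (measurableSet_singleton k)]
  simp [Set.preimage, smul_eq_mul]

lemma aux_step {Ω : Type*} [MeasurableSpace Ω] (P : Measure Ω) [IsProbabilityMeasure P]
    (X : ℕ → ℕ → Ω → ℕ) (Z : ℕ → Ω → ℕ)
    (hZrec : ∀ n ω, Z (n + 1) ω = ∑ i ∈ Finset.range (Z n ω), X n i ω)
    (hXmeas : ∀ n i, Measurable (X n i))
    (hindep : iIndepFun (fun p : ℕ × ℕ => X p.1 p.2) P)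
    (hident : ∀ n i, IdentDistrib (X n i) (X 0 0) P P)
    (hZX : ∀ n, IndepFun (Z n) (fun ω i => X n i ω) P)
    (hZmeas : ∀ n, Measurable (Z n))
    (s : ℝ) (hs0 : 0 ≤ s) (hs1 : s ≤ 1) (n : ℕ) :
    ∫ ω, s ^ Z (n + 1) ω ∂P = ∫ ω, (∫ ω', s ^ X 0 0 ω' ∂P) ^ Z n ω ∂P := by
  set μ : ℝ := ∫ ω', s ^ X 0 0 ω' ∂P with hμdef
  have hμ0 : 0 ≤ μ := integral_nonneg fun ω => pow_nonneg hs0 _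
  have hμ1 : μ ≤ 1 := by
    have h := integral_mono (aux_int_pow P (X 0 0) (hXmeas 0 0) s hs0 hs1).1
      (integrable_const 1) (fun ω => pow_le_one₀ hs0 hs1)
    simpa using h
  have key : ∀ k : ℕ, ∫ ω in {ω | Z n ω = k}, s ^ Z (n + 1) ω ∂P
      = (P {ω | Z n ω = k}).toReal * μ ^ k := by
    intro k
    have hAk : MeasurableSet {ω | Z n ω = k} := hZmeas n (measurableSet_singleton k)
    have h1 : ∫ ω in {ω | Z n ω = k}, s ^ Z (n + 1) ω ∂P
        = ∫ ω in {ω | Z n ω = k}, ∏ i ∈ Finset.range k, s ^ X n i ω ∂P := by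
      refine setIntegral_congr_fun hAk fun ω hω => ?_
      simp only [Set.mem_setOf_eq] at hω
      rw [hZrec n ω, hω]
      exact (Finset.prod_pow_eq_pow_sum _ _ _).symm
    have h2 : ∫ ω in {ω | Z n ω = k}, ∏ i ∈ Finset.range k, s ^ X n i ω ∂P
        = ∫ ω, (if Z n ω = k then (1:ℝ) else 0) * ∏ i ∈ Finset.range k, s ^ X n i ω ∂P := by
      rw [← integral_indicator hAk]
      congr 1; funext ω
      by_cases h : Z n ω = k <;> simp [Set.indicator_apply, h]
    have hφ : Measurable (fun z : ℕ => if z = k then (1:ℝ) else 0) := measurable_from_top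
    have hψ : Measurable (fun v : ℕ → ℕ => ∏ i ∈ Finset.range k, s ^ v i) :=
      Finset.measurable_prod _ fun i _ =>
        (measurable_from_top (f := fun x : ℕ => s ^ x)).comp (measurable_pi_apply i)
    have hInd := (hZX n).comp hφ hψ
    have hIφ : Integrable (fun ω => if Z n ω = k then (1:ℝ) else 0) P := by
      have he : (fun ω => if Z n ω = k then (1:ℝ) else 0)
          = Set.indicator {ω | Z n ω = k} (fun _ => 1) := by
        funext ω; by_cases h : Z n ω = k <;> simp [h]
      rw [he]; exact (integrable_const 1).indicator hAk
    have hindep' : iIndepFun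
        (fun q : ℕ × ℕ => fun ω => s ^ X q.1 q.2 ω) P :=
      hindep.comp (fun _ => fun x : ℕ => s ^ x) fun _ => measurable_from_top
    have hmeas' : ∀ q : ℕ × ℕ, Measurable (fun ω => s ^ X q.1 q.2 ω) := fun q =>
      (measurable_from_top (f := fun x : ℕ => s ^ x)).comp (hXmeas q.1 q.2)
    have hint' : ∀ q : ℕ × ℕ, Integrable (fun ω => s ^ X q.1 q.2 ω) P := fun q =>
      (aux_int_pow P (X q.1 q.2) (hXmeas q.1 q.2) s hs0 hs1).1
    have haux := aux_integral_prod _ hindep' hmeas' hint'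
      ((Finset.range k).map ⟨fun i => ((n, i) : ℕ × ℕ), fun a b h => by simpa using h⟩)
    simp only [Finset.prod_map] at haux
    change Integrable (fun ω => ∏ i ∈ Finset.range k, s ^ X n i ω) P ∧ ∫ ω, ∏ i ∈ Finset.range k, s ^ X n i ω ∂P = ∏ i ∈ Finset.range k, ∫ ω, s ^ X n i ω ∂P at haux
    have hIψ : Integrable (fun ω => ∏ i ∈ Finset.range k, s ^ X n i ω) P := haux.1
    have h3 := hInd.integral_mul_eq_mul_integral hIφ.aestronglyMeasurable hIψ.aestronglyMeasurable
    have h4 : (∫ ω, (if Z n ω = k then (1:ℝ) else 0) ∂P) = (P {ω | Z n ω = k}).toReal := by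
      have he : (fun ω => if Z n ω = k then (1:ℝ) else 0)
          = Set.indicator {ω | Z n ω = k} (fun _ => 1) := by
        funext ω; by_cases h : Z n ω = k <;> simp [h]
      rw [he, integral_indicator_const (1:ℝ) hAk]; simp [measureReal_def]
    have hid : ∀ i : ℕ, ∫ ω, s ^ X n i ω ∂P = μ := fun i =>
      ((hident n i).comp (measurable_from_top (f := fun x : ℕ => s ^ x))).integral_eq
    have h5 : ∫ ω, ∏ i ∈ Finset.range k, s ^ X n i ω ∂P = μ ^ k := by
      rw [haux.2]
      simp [hid]
    rw [h1, h2]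
    have h3' : ∫ ω, (if Z n ω = k then (1:ℝ) else 0) * ∏ i ∈ Finset.range k, s ^ X n i ω ∂P
        = (∫ ω, (if Z n ω = k then (1:ℝ) else 0) ∂P)
          * ∫ ω, ∏ i ∈ Finset.range k, s ^ X n i ω ∂P := by
      exact h3
    rw [h3', h4, h5]
  have hunion : (⋃ k : ℕ, {ω | Z n ω = k}) = Set.univ := by
    ext ω; simp
  have hdisj : Pairwise (Function.onFun Disjoint fun k : ℕ => {ω | Z n ω = k}) := by
    intro a b hab
    simp only [Function.onFun, Set.disjoint_left]
    intro ω ha hb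
    exact hab (ha.symm.trans hb)
  have hmeasA : ∀ k : ℕ, MeasurableSet {ω | Z n ω = k} := fun k =>
    hZmeas n (measurableSet_singleton k)
  have hintL : Integrable (fun ω => s ^ Z (n + 1) ω) P :=
    (aux_int_pow P (Z (n + 1)) (hZmeas (n + 1)) s hs0 hs1).1
  calc ∫ ω, s ^ Z (n + 1) ω ∂P
      = ∫ ω in ⋃ k : ℕ, {ω | Z n ω = k}, s ^ Z (n + 1) ω ∂P := by
        rw [hunion, setIntegral_univ]
    _ = ∑' k : ℕ, ∫ ω in {ω | Z n ω = k}, s ^ Z (n + 1) ω ∂P :=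
        integral_iUnion hmeasA hdisj hintL.integrableOn
    _ = ∑' k : ℕ, (P {ω | Z n ω = k}).toReal * μ ^ k := tsum_congr key
    _ = ∫ ω, μ ^ Z n ω ∂P := ((aux_int_pow P (Z n) (hZmeas n) μ hμ0 hμ1).2).symm
set_option maxHeartbeats 1000000 in
/-- Lemma 6.1 (Athreya): convergence of `f_n(s)/p_1^n` to a function `Q` with `Q(0)=0`
and the functional equation `Q(f(s)) = p_1 Q(s)`. -/
theorem athreya_generating_function_limit
    {Ω : Type*} [MeasurableSpace Ω] (P : Measure Ω) [IsProbabilityMeasure P]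
    (X : ℕ → ℕ → Ω → ℕ) (Z : ℕ → Ω → ℕ)
    (hZ0 : ∀ ω, Z 0 ω = 1)
    (hZrec : ∀ n ω, Z (n + 1) ω = ∑ i ∈ Finset.range (Z n ω), X n i ω)
    (hXmeas : ∀ n i, Measurable (X n i))
    (hindep : iIndepFun (fun p : ℕ × ℕ => X p.1 p.2) P)
    (hident : ∀ n i, IdentDistrib (X n i) (X 0 0) P P)
    (hZX : ∀ n, IndepFun (Z n) (fun ω i => X n i ω) P)
    (m : ℝ) (hm : m = ∫ ω, (Z 1 ω : ℝ) ∂P) (hm1 : 1 < m)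
    (hmInt : Integrable (fun ω => (Z 1 ω : ℝ)) P)
    (p : ℕ → ℝ) (hp : ∀ k, p k = (P {ω | X 0 0 ω = k}).toReal)
    (hp0 : p 0 = 0) (hp1 : 0 < p 1) :
    ∃ Q : ℝ → ℝ,
      (∀ s ∈ Set.Ico (0 : ℝ) 1,
        Tendsto (fun n => (∫ ω, s ^ Z n ω ∂P) / (p 1) ^ n) atTop (nhds (Q s))) ∧
      Q 0 = 0 ∧
      (∀ s ∈ Set.Ico (0 : ℝ) 1, Q (∑' j : ℕ, p j * s ^ j) = p 1 * Q s) := by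
  classical
  -- measurability of Z
  have hZmeas : ∀ n, Measurable (Z n) := by
    intro n; induction n with
    | zero =>
      have h : Z 0 = fun _ => 1 := funext hZ0
      rw [h]; exact measurable_const
    | succ n ih =>
      have h : Z (n + 1) = fun ω => ∑ i ∈ Finset.range (Z n ω), X n i ω := funext (hZrec n)
      rw [h]
      apply measurable_to_countable'
      intro mm
      have hset : (fun ω => ∑ i ∈ Finset.range (Z n ω), X n i ω) ⁻¹' {mm}
          = ⋃ k : ℕ, ({ω | Z n ω = k} ∩ {ω | ∑ i ∈ Finset.range k, X n i ω = mm}) := by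
        ext ω
        simp only [Set.mem_preimage, Set.mem_singleton_iff, Set.mem_iUnion, Set.mem_inter_iff,
          Set.mem_setOf_eq]
        constructor
        · intro hω; exact ⟨Z n ω, rfl, hω⟩
        · rintro ⟨k, hk, hsum⟩; rw [hk]; exact hsum
      rw [hset]
      exact MeasurableSet.iUnion fun k =>
        (ih (measurableSet_singleton k)).inter
          ((Finset.measurable_sum _ fun i _ => hXmeas n i) (measurableSet_singleton mm))
  -- basic facts about p
  have hpnn : ∀ k, 0 ≤ p k := fun k => by rw [hp k]; exact ENNReal.toReal_nonneg
  have hsum1 : ∑' k : ℕ, P {ω | X 0 0 ω = k} = 1 := by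
    have hdisj : Pairwise (Function.onFun Disjoint fun k : ℕ => {ω | X 0 0 ω = k}) := by
      intro a b hab
      simp only [Function.onFun, Set.disjoint_left]
      intro ω ha hb
      exact hab (ha.symm.trans hb)
    have hmeasA : ∀ k : ℕ, MeasurableSet {ω | X 0 0 ω = k} := fun k =>
      hXmeas 0 0 (measurableSet_singleton k)
    rw [← measure_iUnion hdisj hmeasA]
    have : (⋃ k : ℕ, {ω | X 0 0 ω = k}) = Set.univ := by ext ω; simp
    rw [this, measure_univ]
  have hsummable : Summable p := by
    have h : p = fun k => (P {ω | X 0 0 ω = k}).toReal := funext hp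
    rw [h]
    exact ENNReal.summable_toReal (by rw [hsum1]; exact ENNReal.one_ne_top)
  have htsum : ∑' k, p k = 1 := by
    simp only [hp]
    rw [← ENNReal.tsum_toReal_eq fun k => measure_ne_top P _, hsum1, ENNReal.toReal_one]
  have hp1le : p 1 ≤ 1 := by
    have := Summable.le_tsum hsummable 1 fun j _ => hpnn j
    rw [htsum] at this; exact this
  -- p 1 < 1
  have hp1lt : p 1 < 1 := by
    rcases lt_or_eq_of_le hp1le with h | h
    · exact h
    · exfalso
      have hmeas1 : MeasurableSet {ω | X 0 0 ω = 1} := hXmeas 0 0 (measurableSet_singleton 1)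
      have hP1 : P {ω | X 0 0 ω = 1} = 1 := by
        rw [← ENNReal.toReal_eq_one_iff, ← hp 1, h]
      have hae : ∀ᵐ ω ∂P, X 0 0 ω = 1 := by
        rw [← prob_compl_eq_zero_iff hmeas1] at hP1
        have := hP1
        rw [ae_iff]
        convert this using 2
        rfl
      have hZ1 : ∀ ω, Z 1 ω = X 0 0 ω := fun ω => by
        rw [hZrec 0 ω, hZ0 ω, Finset.sum_range_one]
      have : m = 1 := by
        rw [hm]
        have : (fun ω => (Z 1 ω : ℝ)) =ᵐ[P] fun _ => (1 : ℝ) := by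
          filter_upwards [hae] with ω hω
          rw [hZ1 ω, hω]; norm_num
        rw [integral_congr_ae this]
        simp
      linarith
  -- the generating function F
  set F : ℝ → ℝ := fun s => ∑' j : ℕ, p j * s ^ j with hFdef
  have hsummF : ∀ s : ℝ, 0 ≤ s → s ≤ 1 → Summable (fun j : ℕ => p j * s ^ j) := fun s h0 h1 =>
    Summable.of_nonneg_of_le (fun j => mul_nonneg (hpnn j) (pow_nonneg h0 j))
      (fun j => mul_le_of_le_one_right (hpnn j) (pow_le_one₀ h0 h1)) hsummable
  have hFnn : ∀ s : ℝ, 0 ≤ s → s ≤ 1 → 0 ≤ F s := fun s h0 _ =>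
    tsum_nonneg fun j => mul_nonneg (hpnn j) (pow_nonneg h0 j)
  have hF0 : F 0 = 0 := by
    have h : (fun j : ℕ => p j * (0:ℝ) ^ j) = fun _ => (0:ℝ) := by
      funext j; cases j with
      | zero => simp [hp0]
      | succ j => simp
    rw [hFdef]
    simp only [h]
    exact tsum_zero
  have hFlb : ∀ s : ℝ, 0 ≤ s → s ≤ 1 → p 1 * s ≤ F s := by
    intro s h0 h1
    have h := Summable.le_tsum (hsummF s h0 h1) 1 fun j _ => mul_nonneg (hpnn j) (pow_nonneg h0 j)
    simpa using h
  have hsplit : ∀ f : ℕ → ℝ, Summable f → ∑' j, f j = f 0 + f 1 + ∑' j, f (j + 2) := by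
    intro f hf
    rw [Summable.tsum_eq_zero_add hf, Summable.tsum_eq_zero_add ((summable_nat_add_iff 1).mpr hf), ← add_assoc]
  have htail : ∑' j : ℕ, p (j + 2) = 1 - p 1 := by
    have h := hsplit p hsummable
    rw [htsum, hp0] at h; linarith
  have hFub : ∀ s : ℝ, 0 ≤ s → s ≤ 1 → F s ≤ p 1 * s + (1 - p 1) * s ^ 2 := by
    intro s h0 h1
    have hs := hsummF s h0 h1
    have heq := hsplit (fun j => p j * s ^ j) hs
    have htail1 : Summable (fun j : ℕ => p (j + 2) * s ^ (j + 2)) :=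
      (summable_nat_add_iff 2).mpr hs
    have htail2 : Summable (fun j : ℕ => p (j + 2) * s ^ 2) :=
      ((summable_nat_add_iff 2).mpr hsummable).mul_right _
    have hb : ∑' j : ℕ, p (j + 2) * s ^ (j + 2) ≤ ∑' j : ℕ, p (j + 2) * s ^ 2 := by
      refine Summable.tsum_le_tsum (fun j => ?_) htail1 htail2
      exact mul_le_mul_of_nonneg_left (pow_le_pow_of_le_one h0 h1 (by omega)) (hpnn _)
    have hc : ∑' j : ℕ, p (j + 2) * s ^ 2 = (1 - p 1) * s ^ 2 := by
      rw [tsum_mul_right, htail]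
    simp only [pow_zero, pow_one, hp0, mul_one, zero_mul, zero_add] at heq
    calc F s = p 1 * s + ∑' j : ℕ, p (j + 2) * s ^ (j + 2) := heq
      _ ≤ p 1 * s + ∑' j : ℕ, p (j + 2) * s ^ 2 := by linarith
      _ = p 1 * s + (1 - p 1) * s ^ 2 := by rw [hc]
  have hFle : ∀ s : ℝ, 0 ≤ s → s ≤ 1 → F s ≤ s := by
    intro s h0 h1
    have h := hFub s h0 h1
    nlinarith [mul_nonneg (sub_nonneg.mpr hp1le) (mul_nonneg h0 (sub_nonneg.mpr h1))]
  -- connection F s = ∫ s ^ X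
  have hFeq : ∀ s : ℝ, 0 ≤ s → s ≤ 1 → F s = ∫ ω, s ^ X 0 0 ω ∂P := by
    intro s h0 h1
    rw [(aux_int_pow P (X 0 0) (hXmeas 0 0) s h0 h1).2]
    exact tsum_congr fun k => by rw [hp k]
  -- integral = iterate
  have hfn : ∀ n : ℕ, ∀ s : ℝ, 0 ≤ s → s ≤ 1 → ∫ ω, s ^ Z n ω ∂P = F^[n] s := by
    intro n
    induction n with
    | zero =>
      intro s h0 h1
      have h : (fun ω => s ^ Z 0 ω) = fun _ => s := funext fun ω => by rw [hZ0 ω, pow_one]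
      rw [h]; simp
    | succ n ih =>
      intro s h0 h1
      rw [aux_step P X Z hZrec hXmeas hindep hident hZX hZmeas s h0 h1 n, ← hFeq s h0 h1,
        ih (F s) (hFnn s h0 h1) ((hFle s h0 h1).trans h1), Function.iterate_succ_apply]
  -- definition of Q
  set Q : ℝ → ℝ := fun s => ⨆ n : ℕ, F^[n] s / p 1 ^ n with hQdef
  -- iterate bounds
  have hiter : ∀ s : ℝ, 0 ≤ s → s ≤ 1 → ∀ n, 0 ≤ F^[n] s ∧ F^[n] s ≤ s := by
    intro s h0 h1 n
    induction n with
    | zero => exact ⟨h0, le_refl s⟩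
    | succ n ih =>
      rw [Function.iterate_succ_apply']
      exact ⟨hFnn _ ih.1 (ih.2.trans h1),
        (hFle _ ih.1 (ih.2.trans h1)).trans ih.2⟩
  -- the main convergence statement
  have hQtend : ∀ s : ℝ, 0 ≤ s → s < 1 →
      Tendsto (fun n => F^[n] s / p 1 ^ n) atTop (nhds (Q s)) := by
    intro s h0 h1
    set c : ℝ := p 1 + (1 - p 1) * s with hcdef
    have hc1 : c < 1 := by
      rw [hcdef]; nlinarith [mul_pos (show (0:ℝ) < 1 - p 1 by linarith) (show (0:ℝ) < 1 - s by linarith)]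
    have hc0 : 0 < c := by
      rw [hcdef]; nlinarith [mul_nonneg (show (0:ℝ) ≤ 1 - p 1 by linarith) h0]
    set a : ℝ := (1 - p 1) / p 1 with hadef
    have ha0 : 0 ≤ a := div_nonneg (by linarith) (le_of_lt hp1)
    have hs1 : s ≤ 1 := le_of_lt h1
    have hgeo : ∀ n, F^[n] s ≤ s * c ^ n := by
      intro n
      induction n with
      | zero => simp
      | succ n ih =>
        rw [Function.iterate_succ_apply']
        have hmem := hiter s h0 hs1 n
        have h2 : F (F^[n] s) ≤ p 1 * F^[n] s + (1 - p 1) * (F^[n] s) ^ 2 :=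
          hFub _ hmem.1 (hmem.2.trans hs1)
        have h3 : p 1 * F^[n] s + (1 - p 1) * (F^[n] s) ^ 2 ≤ c * F^[n] s := by
          rw [hcdef]
          nlinarith [mul_nonneg (mul_nonneg (show (0:ℝ) ≤ 1 - p 1 by linarith) hmem.1)
            (sub_nonneg.mpr hmem.2)]
        calc F (F^[n] s) ≤ c * F^[n] s := h2.trans h3
          _ ≤ c * (s * c ^ n) := by
              exact mul_le_mul_of_nonneg_left ih (le_of_lt hc0)
          _ = s * c ^ (n + 1) := by ring
    have hmono : Monotone (fun n => F^[n] s / p 1 ^ n) := by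
      apply monotone_nat_of_le_succ
      intro n
      have hmem := hiter s h0 hs1 n
      have hlb := hFlb _ hmem.1 (hmem.2.trans hs1)
      rw [Function.iterate_succ_apply']
      rw [div_le_div_iff₀ (pow_pos hp1 n) (pow_pos hp1 (n + 1))]
      have hpow : (p 1 : ℝ) ^ (n + 1) = p 1 ^ n * p 1 := pow_succ _ _
      rw [hpow]
      have h5 := mul_le_mul_of_nonneg_right hlb (le_of_lt (pow_pos hp1 n))
      calc F^[n] s * (p 1 ^ n * p 1) = p 1 * F^[n] s * p 1 ^ n := by ring
        _ ≤ F (F^[n] s) * p 1 ^ n := h5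
    have hsumbd : ∀ n, ∑ k ∈ Finset.range n, F^[k] s ≤ s * (1 / (1 - c)) := by
      intro n
      have h1' : ∑ k ∈ Finset.range n, F^[k] s ≤ ∑ k ∈ Finset.range n, s * c ^ k :=
        Finset.sum_le_sum fun k _ => hgeo k
      have h2' : ∑ k ∈ Finset.range n, s * c ^ k = s * ∑ k ∈ Finset.range n, c ^ k := by
        rw [Finset.mul_sum]
      have h3' : ∑ k ∈ Finset.range n, c ^ k ≤ 1 / (1 - c) := by
        rw [geom_sum_eq hc1.ne n]
        have he : (c ^ n - 1) / (c - 1) = (1 - c ^ n) / (1 - c) := by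
          rw [div_eq_div_iff (by linarith) (by linarith)]; ring
        rw [he, div_le_div_iff₀ (by linarith) (by linarith)]
        nlinarith [mul_nonneg (pow_nonneg (le_of_lt hc0) n) (show (0:ℝ) ≤ 1 - c by linarith)]
      calc ∑ k ∈ Finset.range n, F^[k] s ≤ s * ∑ k ∈ Finset.range n, c ^ k := by
            rw [← h2']; exact h1'
        _ ≤ s * (1 / (1 - c)) := mul_le_mul_of_nonneg_left h3' h0
    have hgb : ∀ n, F^[n] s / p 1 ^ n
        ≤ s * Real.exp (a * ∑ k ∈ Finset.range n, F^[k] s) := by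
      intro n
      induction n with
      | zero =>
        simp only [Function.iterate_zero_apply, pow_zero, div_one, Finset.range_zero,
          Finset.sum_empty, mul_zero, Real.exp_zero, mul_one, le_refl]
      | succ n ih =>
        have hmem := hiter s h0 hs1 n
        have hub := hFub _ hmem.1 (hmem.2.trans hs1)
        have hgnn : 0 ≤ F^[n] s / p 1 ^ n :=
          div_nonneg hmem.1 (le_of_lt (pow_pos hp1 n))
        have hstep1 : F^[n + 1] s / p 1 ^ (n + 1)
            ≤ (F^[n] s / p 1 ^ n) * (1 + a * F^[n] s) := by
          rw [Function.iterate_succ_apply']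
          have heq : (F^[n] s / p 1 ^ n) * (1 + a * F^[n] s)
              = (p 1 * F^[n] s + (1 - p 1) * (F^[n] s) ^ 2) / p 1 ^ (n + 1) := by
            rw [hadef, pow_succ]
            field_simp
            ring
          rw [heq]
          exact div_le_div_of_nonneg_right hub (le_of_lt (pow_pos hp1 (n + 1)))
        have hstep2 : (1 : ℝ) + a * F^[n] s ≤ Real.exp (a * F^[n] s) := by
          have := Real.add_one_le_exp (a * F^[n] s)
          linarith
        calc F^[n + 1] s / p 1 ^ (n + 1)
            ≤ (F^[n] s / p 1 ^ n) * (1 + a * F^[n] s) := hstep1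
          _ ≤ (F^[n] s / p 1 ^ n) * Real.exp (a * F^[n] s) :=
              mul_le_mul_of_nonneg_left hstep2 hgnn
          _ ≤ (s * Real.exp (a * ∑ k ∈ Finset.range n, F^[k] s)) * Real.exp (a * F^[n] s) :=
              mul_le_mul_of_nonneg_right ih (le_of_lt (Real.exp_pos _))
          _ = s * Real.exp (a * ∑ k ∈ Finset.range (n + 1), F^[k] s) := by
              rw [Finset.sum_range_succ, mul_add, Real.exp_add]; ring
    have hbdd : BddAbove (Set.range fun n => F^[n] s / p 1 ^ n) := by
      refine ⟨s * Real.exp (a * (s * (1 / (1 - c)))), ?_⟩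
      rintro x ⟨n, rfl⟩
      calc F^[n] s / p 1 ^ n ≤ s * Real.exp (a * ∑ k ∈ Finset.range n, F^[k] s) := hgb n
        _ ≤ s * Real.exp (a * (s * (1 / (1 - c)))) := by
            apply mul_le_mul_of_nonneg_left _ h0
            exact Real.exp_le_exp.mpr (mul_le_mul_of_nonneg_left (hsumbd n) ha0)
    exact tendsto_atTop_ciSup hmono hbdd
  -- conclude
  refine ⟨Q, ?_, ?_, ?_⟩
  · intro s hs
    have h : (fun n => (∫ ω, s ^ Z n ω ∂P) / p 1 ^ n) = fun n => F^[n] s / p 1 ^ n :=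
      funext fun n => by rw [hfn n s hs.1 (le_of_lt hs.2)]
    rw [h]
    exact hQtend s hs.1 hs.2
  · have hiter0 : ∀ n : ℕ, F^[n] (0:ℝ) = 0 := by
      intro n; induction n with
      | zero => simp
      | succ n ih => rw [Function.iterate_succ_apply', ih, hF0]
    rw [hQdef]
    simp only [hiter0, zero_div]
    exact ciSup_const
  · intro s hs
    have hFs : 0 ≤ F s ∧ F s < 1 :=
      ⟨hFnn s hs.1 (le_of_lt hs.2), lt_of_le_of_lt (hFle s hs.1 (le_of_lt hs.2)) hs.2⟩
    have h1 : Tendsto (fun n => F^[n] (F s) / p 1 ^ n) atTop (nhds (Q (F s))) :=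
      hQtend (F s) hFs.1 hFs.2
    have h2 : (fun n => F^[n] (F s) / p 1 ^ n)
        = fun n => p 1 * (F^[n + 1] s / p 1 ^ (n + 1)) := by
      funext n
      rw [← Function.iterate_succ_apply]
      rw [pow_succ]
      field_simp
    have h3 : Tendsto (fun n => F^[n + 1] s / p 1 ^ (n + 1)) atTop (nhds (Q s)) :=
      (hQtend s hs.1 hs.2).comp (tendsto_add_atTop_nat 1)
    have h4 : Tendsto (fun n => F^[n] (F s) / p 1 ^ n) atTop (nhds (p 1 * Q s)) := by
      rw [h2]
      exact h3.const_mul (p 1)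
    exact tendsto_nhds_unique h1 h4
end

section
/- There exist constants C₁ > 0 and c₀ > 0 such that for all n ≥ 1, P(Z_n ≤ n) ≤ C₁ exp(−c₀ n). (Lemma 6.2.) -/
open MeasureTheory ProbabilityTheory Filter
open scoped ENNReal NNReal

lemma gw_bdd_integrable {α : Type*} [MeasurableSpace α] (μ : Measure α) [IsFiniteMeasure μ]
    {g : α → ℝ} (hg : Measurable g) (c : ℝ) (h : ∀ ω, ‖g ω‖ ≤ c) :
    Integrable g μ :=
  (integrable_const c).mono' hg.aestronglyMeasurable (Filter.Eventually.of_forall h)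

lemma gw_integral_comp_nat {Ω : Type*} [MeasurableSpace Ω] (P : Measure Ω)
    [IsProbabilityMeasure P] (Y : Ω → ℕ) (hY : Measurable Y) (g : ℕ → ℝ) (c : ℝ)
    (hc : ∀ k, ‖g k‖ ≤ c) :
    ∫ ω, g (Y ω) ∂P = ∑' k, (P (Y ⁻¹' {k})).toReal * g k := by
  have hmap : IsProbabilityMeasure (P.map Y) := Measure.isProbabilityMeasure_map hY.aemeasurable
  have h1 : ∫ ω, g (Y ω) ∂P = ∫ k, g k ∂(P.map Y) :=
    (integral_map hY.aemeasurable measurable_from_nat.aestronglyMeasurable).symm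
  rw [h1, integral_countable' (gw_bdd_integrable _ measurable_from_nat c hc)]
  refine tsum_congr fun k => ?_
  rw [measureReal_def, Measure.map_apply hY (measurableSet_singleton k), smul_eq_mul]

lemma gw_iterate_bound {q : ℝ} (hq0 : 0 < q) (hq1 : q ≤ 1) :
    ∃ K : ℕ, ∀ n : ℕ,
      (fun t => (1 - q) * t + q * t ^ 2)^[n] (1 - q / 4) ≤ (1 - q / 2) ^ n / (1 - q / 2) ^ K := by
  set φ : ℝ → ℝ := fun t => (1 - q) * t + q * t ^ 2 with hφdef
  set γ : ℝ := 1 - q / 2 with hγdef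
  set s : ℕ → ℝ := fun k => φ^[k] (1 - q / 4) with hsdef
  have hγ0 : 0 < γ := by rw [hγdef]; linarith
  have hγ1 : γ < 1 := by rw [hγdef]; linarith
  have hφ_nonneg : ∀ t, 0 ≤ t → t ≤ 1 → 0 ≤ φ t := by
    intro t ht0 ht1
    have h1 : 0 ≤ (1 - q) * t := mul_nonneg (by linarith) ht0
    have h2 : 0 ≤ q * t ^ 2 := by positivity
    simp only [hφdef]; linarith
  have hφ_le : ∀ t, 0 ≤ t → t ≤ 1 → φ t ≤ t := by
    intro t ht0 ht1
    have h1 : 0 ≤ q * t * (1 - t) := mul_nonneg (mul_nonneg hq0.le ht0) (by linarith)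
    simp only [hφdef]; nlinarith
  have hsucc : ∀ k, s (k + 1) = φ (s k) := fun k => Function.iterate_succ_apply' φ k _
  have hs01 : ∀ k, 0 ≤ s k ∧ s k ≤ 1 := by
    intro k; induction k with
    | zero =>
      constructor
      · show (0:ℝ) ≤ φ^[0] (1 - q/4); simp; linarith
      · show φ^[0] (1 - q/4) ≤ 1; simp; linarith
    | succ k ih =>
      rw [hsucc k]
      exact ⟨hφ_nonneg _ ih.1 ih.2, le_trans (hφ_le _ ih.1 ih.2) ih.2⟩
  have hrec : ∀ k, 1 - s (k + 1) = (1 - s k) * (1 + q * s k) := by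
    intro k; rw [hsucc k]; simp only [hφdef]; ring
  have hu : ∀ k, min (1/2) ((1 + q/2) ^ k * (q/4)) ≤ 1 - s k := by
    intro k; induction k with
    | zero =>
      have : (1:ℝ) - s 0 = q / 4 := by
        show (1:ℝ) - φ^[0] (1 - q/4) = q/4; simp
      rw [this]
      exact le_trans (min_le_right _ _) (by simp)
    | succ k ih =>
      have h01 := hs01 k
      have hmono : 1 - s k ≤ 1 - s (k+1) := by
        rw [hrec k]
        nlinarith [h01.1, h01.2, mul_nonneg hq0.le h01.1]
      rcases le_or_gt (1/2) (1 - s k) with h | h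
      · exact le_trans (min_le_left _ _) (le_trans h hmono)
      · have hsk : 1/2 < s k := by linarith
        have hstep : (1 - s k) * (1 + q/2) ≤ 1 - s (k+1) := by
          rw [hrec k]
          have : 1 + q/2 ≤ 1 + q * s k := by nlinarith
          nlinarith [h01.1, h01.2]
        have hIH : (1 + q/2) ^ k * (q/4) ≤ 1 - s k := by
          rcases min_cases (1/2 : ℝ) ((1 + q/2) ^ k * (q/4)) with ⟨heq, _⟩ | ⟨heq, hle⟩
          · -- min = 1/2 ≤ 1 - s k contradicts h
            exfalso; rw [heq] at ih; linarith
          · rw [heq] at ih; exact ih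
        refine le_trans (min_le_right _ _) ?_
        calc (1 + q/2) ^ (k+1) * (q/4) = ((1 + q/2) ^ k * (q/4)) * (1 + q/2) := by ring
          _ ≤ (1 - s k) * (1 + q/2) := by
              apply mul_le_mul_of_nonneg_right hIH; linarith
          _ ≤ 1 - s (k+1) := hstep
  obtain ⟨K, hK⟩ := pow_unbounded_of_one_lt (2 / q) (show (1:ℝ) < 1 + q/2 by linarith)
  have hK' : (1/2 : ℝ) ≤ (1 + q/2) ^ K * (q/4) := by
    have h1 : (2/q) * (q/4) ≤ (1 + q/2) ^ K * (q/4) :=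
      mul_le_mul_of_nonneg_right hK.le (by positivity)
    have h2 : (2/q) * (q/4) = 1/2 := by field_simp; ring
    linarith
  have hsK : s K ≤ 1/2 := by
    have := hu K
    rw [min_eq_left hK'] at this
    linarith
  have hB : ∀ j, s (K + j) ≤ 1/2 * γ ^ j := by
    intro j; induction j with
    | zero => simpa using hsK
    | succ j ih =>
      have hx0 := (hs01 (K + j)).1
      have hxhalf : s (K + j) ≤ 1/2 := by
        have hp1 : γ ^ j ≤ 1 := pow_le_one₀ hγ0.le hγ1.le
        nlinarith
      have : s (K + (j+1)) = φ (s (K + j)) := by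
        rw [show K + (j+1) = (K + j) + 1 by ring, hsucc]
      rw [this]
      have hfac : (1 - q) + q * s (K + j) ≤ γ := by rw [hγdef]; nlinarith
      have hphix : φ (s (K+j)) = s (K+j) * ((1 - q) + q * s (K+j)) := by
        simp only [hφdef]; ring
      rw [hphix, pow_succ]
      have hfnn : (0:ℝ) ≤ (1 - q) + q * s (K + j) := by nlinarith
      have := mul_le_mul ih hfac hfnn (by positivity : (0:ℝ) ≤ 1/2 * γ ^ j)
      linarith
  refine ⟨K, fun n => ?_⟩
  show s n ≤ γ ^ n / γ ^ K
  rcases le_or_gt K n with h | h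
  · obtain ⟨j, rfl⟩ := Nat.exists_eq_add_of_le h
    have := hB j
    have hpow : γ ^ (K + j) / γ ^ K = γ ^ j := by
      rw [pow_add]; field_simp
    rw [hpow]
    have : (0:ℝ) ≤ γ ^ j := by positivity
    nlinarith [hB j]
  · have h1 : s n ≤ 1 := (hs01 n).2
    have h2 : γ ^ K ≤ γ ^ n := pow_le_pow_of_le_one hγ0.le hγ1.le h.le
    have h3 : (1:ℝ) ≤ γ ^ n / γ ^ K := by
      rw [one_le_div (by positivity)]; exact h2
    linarith


open MeasureTheory ProbabilityTheory Filter
open scoped ENNReal NNReal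

/-- Lemma 6.2: exponential bound for `P(Z_n ≤ n)` for a supercritical Galton–Watson
process with `p_0 = 0`. -/
theorem gw_lower_deviation_bound
    {Ω : Type*} [MeasurableSpace Ω] (P : Measure Ω) [IsProbabilityMeasure P]
    (X : ℕ → ℕ → Ω → ℕ) (Z : ℕ → Ω → ℕ)
    (hZ0 : ∀ ω, Z 0 ω = 1)
    (hZrec : ∀ n ω, Z (n + 1) ω = ∑ i ∈ Finset.range (Z n ω), X n i ω)
    (hXmeas : ∀ n i, Measurable (X n i))
    (hindep : iIndepFun (fun p : ℕ × ℕ => X p.1 p.2) P)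
    (hident : ∀ n i, IdentDistrib (X n i) (X 0 0) P P)
    (hZX : ∀ n, IndepFun (Z n) (fun ω i => X n i ω) P)
    (m : ℝ) (hm : m = ∫ ω, (Z 1 ω : ℝ) ∂P) (hm1 : 1 < m)
    (hmInt : Integrable (fun ω => (Z 1 ω : ℝ)) P)
    (hp0 : P {ω | X 0 0 ω = 0} = 0) :
    ∃ C₁ > (0 : ℝ), ∃ c₀ > (0 : ℝ), ∀ n : ℕ, 1 ≤ n →
      (P {ω | Z n ω ≤ n}).toReal ≤ C₁ * Real.exp (-c₀ * n) := by
  -- measurability of Z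
  have hZmeas : ∀ n, Measurable (Z n) := by
    intro n; induction n with
    | zero =>
      have h : Z 0 = fun _ => 1 := funext hZ0
      rw [h]; exact measurable_const
    | succ n ih =>
      apply measurable_to_countable'
      intro k
      have hset : Z (n+1) ⁻¹' {k} =
          ⋃ z : ℕ, ((Z n ⁻¹' {z}) ∩ ((fun ω => ∑ i ∈ Finset.range z, X n i ω) ⁻¹' {k})) := by
        ext ω
        simp only [Set.mem_preimage, Set.mem_singleton_iff, Set.mem_iUnion, Set.mem_inter_iff]
        constructor
        · intro h; exact ⟨Z n ω, rfl, by rw [← hZrec n ω]; exact h⟩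
        · rintro ⟨z, hz, hsum⟩; rw [hZrec n ω, hz]; exact hsum
      rw [hset]
      exact MeasurableSet.iUnion fun z => (ih (measurableSet_singleton z)).inter
        ((Finset.measurable_sum _ fun i _ => hXmeas n i) (measurableSet_singleton k))
  -- the set A and probability q
  set A : Set Ω := {ω | 2 ≤ X 0 0 ω} with hAdef
  have hA : MeasurableSet A := measurableSet_le measurable_const (hXmeas 0 0)
  set q : ℝ := (P A).toReal with hqdef
  have hq1 : q ≤ 1 := by
    rw [hqdef]
    calc (P A).toReal ≤ (1 : ℝ≥0∞).toReal :=
      ENNReal.toReal_mono (by simp) prob_le_one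
    _ = 1 := by simp
  have hX1 : ∀ᵐ ω ∂P, 1 ≤ X 0 0 ω := by
    rw [ae_iff]
    refine measure_mono_null (fun ω h => ?_) hp0
    simp only [Set.mem_setOf_eq, not_le] at h ⊢
    omega
  have hZ1eq : ∀ ω, Z 1 ω = X 0 0 ω := by
    intro ω
    rw [show (1:ℕ) = 0 + 1 from rfl, hZrec 0 ω, hZ0 ω, Finset.sum_range_one]
  have hq0 : 0 < q := by
    by_contra h
    push_neg at h
    have hPA : P A = 0 := by
      have h0 : (P A).toReal = 0 := le_antisymm (hqdef ▸ h) ENNReal.toReal_nonneg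
      rcases (ENNReal.toReal_eq_zero_iff _).mp h0 with h' | h'
      · exact h'
      · exact absurd h' (measure_ne_top P A)
    have hnotA : ∀ᵐ ω ∂P, ω ∉ A := by
      rw [ae_iff]
      simpa only [not_not, Set.setOf_mem_eq] using hPA
    have hXeq : ∀ᵐ ω ∂P, (Z 1 ω : ℝ) = 1 := by
      filter_upwards [hX1, hnotA] with ω h1 h2
      rw [hZ1eq ω]
      simp only [hAdef, Set.mem_setOf_eq, not_le] at h2
      have : X 0 0 ω = 1 := by omega
      rw [this]; norm_num
    have : m = 1 := by
      rw [hm, integral_congr_ae hXeq, integral_const]; simp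
    linarith
  -- bounded powers are integrable
  have hpow_bdd : ∀ t : ℝ, 0 ≤ t → t ≤ 1 → ∀ k : ℕ, ‖t ^ k‖ ≤ 1 := by
    intro t ht0 ht1 k
    rw [Real.norm_eq_abs, abs_of_nonneg (pow_nonneg ht0 k)]
    exact pow_le_one₀ ht0 ht1
  have hint_pow : ∀ (t : ℝ), 0 ≤ t → t ≤ 1 → ∀ (W : Ω → ℕ), Measurable W →
      Integrable (fun ω => t ^ W ω) P := by
    intro t ht0 ht1 W hW
    exact gw_bdd_integrable P (measurable_from_nat.comp hW) 1 fun ω => hpow_bdd t ht0 ht1 _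
  -- generating function
  set F : ℝ → ℝ := fun t => ∫ ω, t ^ X 0 0 ω ∂P with hFdef
  have hF0 : ∀ t : ℝ, 0 ≤ t → 0 ≤ F t := by
    intro t ht0
    exact integral_nonneg fun ω => pow_nonneg ht0 _
  have hFφ : ∀ t : ℝ, 0 ≤ t → t ≤ 1 → F t ≤ (1 - q) * t + q * t ^ 2 := by
    intro t ht0 ht1
    have hind_int : Integrable (fun ω => t + (t ^ 2 - t) * A.indicator (fun _ => (1:ℝ)) ω) P :=
      (integrable_const t).add (((integrable_const (1:ℝ)).indicator hA).const_mul (t ^ 2 - t))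
    have hle : F t ≤ ∫ ω, (t + (t ^ 2 - t) * A.indicator (fun _ => (1:ℝ)) ω) ∂P := by
      refine integral_mono_ae (hint_pow t ht0 ht1 _ (hXmeas 0 0)) hind_int ?_
      filter_upwards [hX1] with ω h1
      by_cases h2 : ω ∈ A
      · rw [Set.indicator_of_mem h2]
        have hX2 : 2 ≤ X 0 0 ω := h2
        have := pow_le_pow_of_le_one ht0 ht1 hX2
        simpa using by linarith
      · rw [Set.indicator_of_notMem h2]
        have : X 0 0 ω = 1 := by
          simp only [hAdef, Set.mem_setOf_eq, not_le] at h2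
          omega
        rw [this]; simp
    have heq : ∫ ω, (t + (t ^ 2 - t) * A.indicator (fun _ => (1:ℝ)) ω) ∂P
        = t + (t ^ 2 - t) * q := by
      rw [integral_add (integrable_const t)
        (((integrable_const (1:ℝ)).indicator hA).const_mul (t ^ 2 - t)),
        integral_const, integral_const_mul, integral_indicator_const _ hA]
      simp [hqdef, measureReal_def]
    rw [heq] at hle
    linarith
  have hF1 : ∀ t : ℝ, 0 ≤ t → t ≤ 1 → F t ≤ 1 := by
    intro t ht0 ht1
    have := hFφ t ht0 ht1
    nlinarith [mul_nonneg (sub_nonneg.2 hq1) (sub_nonneg.2 ht1),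
      mul_nonneg hq0.le (show (0:ℝ) ≤ 1 - t ^ 2 by nlinarith)]
  -- product formula
  have hprod : ∀ t : ℝ, 0 ≤ t → t ≤ 1 → ∀ n z : ℕ,
      ∫ ω, ∏ i ∈ Finset.range z, t ^ X n i ω ∂P = (F t) ^ z := by
    intro t ht0 ht1 n z
    induction z with
    | zero => simp
    | succ z ih =>
      set Y : ℕ × ℕ → Ω → ℝ := fun p ω => t ^ X p.1 p.2 ω with hYdef
      have hYmeas : ∀ p : ℕ × ℕ, Measurable (Y p) :=
        fun p => measurable_from_nat.comp (hXmeas p.1 p.2)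
      have hYindep : iIndepFun Y P :=
        hindep.comp (fun _ => fun k : ℕ => t ^ k) (fun _ => measurable_from_nat)
      have hinj : Function.Injective (fun i : ℕ => (n, i)) := by
        intro a b h; simpa using h
      set s : Finset (ℕ × ℕ) := (Finset.range z).map ⟨fun i => (n, i), hinj⟩ with hsdef
      have hnotmem : (n, z) ∉ s := by
        simp [hsdef]
      have hind := hYindep.indepFun_finsetProd_of_notMem hYmeas hnotmem
      have hprodeq : (∏ j ∈ s, Y j) = fun ω => ∏ i ∈ Finset.range z, t ^ X n i ω := by
        funext ω
        rw [Finset.prod_apply, Finset.prod_map]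
        rfl
      rw [hprodeq] at hind
      have hmeas1 : Measurable fun ω => ∏ i ∈ Finset.range z, t ^ X n i ω :=
        Finset.measurable_prod _ fun i _ => measurable_from_nat.comp (hXmeas n i)
      have hsplit : (fun ω => ∏ i ∈ Finset.range (z+1), t ^ X n i ω)
          = fun ω => (∏ i ∈ Finset.range z, t ^ X n i ω) * (Y (n, z) ω) :=
        funext fun ω => Finset.prod_range_succ _ _
      rw [hsplit, hind.integral_fun_mul_eq_mul_integral hmeas1.aestronglyMeasurable
        (hYmeas (n, z)).aestronglyMeasurable, ih]
      have hY_int : ∫ ω, Y (n, z) ω ∂P = F t := by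
        have hid := (hident n z).comp (measurable_from_nat (f := fun k : ℕ => t ^ k))
        have := hid.integral_eq
        simpa [Function.comp_def, hYdef, hFdef] using this
      rw [hY_int, pow_succ]
  -- key recursion
  have hkey : ∀ t : ℝ, 0 ≤ t → t ≤ 1 → ∀ n,
      ∫ ω, t ^ Z (n+1) ω ∂P = ∫ ω, (F t) ^ Z n ω ∂P := by
    intro t ht0 ht1 n
    set g : ℕ → Ω → ℝ := fun z =>
      Set.indicator (Z n ⁻¹' {z}) (fun ω => ∏ i ∈ Finset.range z, t ^ X n i ω) with hgdef
    have hgmeas : ∀ z, Measurable (g z) := by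
      intro z
      exact (Finset.measurable_prod _ fun i _ =>
        measurable_from_nat.comp (hXmeas n i)).indicator (hZmeas n (measurableSet_singleton z))
    have hprod01 : ∀ z (ω : Ω), 0 ≤ ∏ i ∈ Finset.range z, t ^ X n i ω ∧
        (∏ i ∈ Finset.range z, t ^ X n i ω) ≤ 1 := by
      intro z ω
      constructor
      · exact Finset.prod_nonneg fun i _ => pow_nonneg ht0 _
      · exact Finset.prod_le_one (fun i _ => pow_nonneg ht0 _)
          (fun i _ => pow_le_one₀ ht0 ht1)
    have hpt : ∀ ω, t ^ Z (n+1) ω = ∑' z, g z ω := by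
      intro ω
      have h1 : ∑' z, g z ω = g (Z n ω) ω := by
        refine tsum_eq_single (Z n ω) fun z hz => ?_
        refine Set.indicator_of_notMem ?_ _
        simp only [Set.mem_preimage, Set.mem_singleton_iff]
        exact fun h => hz h.symm
      rw [h1]
      have h2 : g (Z n ω) ω = ∏ i ∈ Finset.range (Z n ω), t ^ X n i ω :=
        Set.indicator_of_mem (by simp) _
      rw [h2, Finset.prod_pow_eq_pow_sum, hZrec n ω]
    have hL : ∫ ω, t ^ Z (n+1) ω ∂P = ∑' z, ∫ ω, g z ω ∂P := by
      rw [show (fun ω => t ^ Z (n+1) ω) = fun ω => ∑' z, g z ω from funext hpt]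
      refine integral_tsum (fun z => (hgmeas z).aestronglyMeasurable) ?_
      have hb1 : ∀ z, ∫⁻ ω, ‖g z ω‖₊ ∂P ≤ P (Z n ⁻¹' {z}) := by
        intro z
        calc ∫⁻ ω, ‖g z ω‖₊ ∂P
            ≤ ∫⁻ ω, (Z n ⁻¹' {z}).indicator (fun _ => 1) ω ∂P := by
              refine lintegral_mono fun ω => ?_
              by_cases h : ω ∈ Z n ⁻¹' {z}
              · rw [Set.indicator_of_mem h]
                rw [hgdef]
                simp only [Set.indicator_of_mem h]
                rw [← ENNReal.ofReal_coe_nnreal, coe_nnnorm]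
                calc ENNReal.ofReal ‖∏ i ∈ Finset.range z, t ^ X n i ω‖
                    ≤ ENNReal.ofReal 1 := by
                      refine ENNReal.ofReal_le_ofReal ?_
                      rw [Real.norm_eq_abs, abs_of_nonneg (hprod01 z ω).1]
                      exact (hprod01 z ω).2
                  _ = 1 := ENNReal.ofReal_one
              · rw [Set.indicator_of_notMem h, hgdef]
                simp [Set.indicator_of_notMem h]
          _ = P (Z n ⁻¹' {z}) := lintegral_indicator_one (hZmeas n (measurableSet_singleton z))
      have hsum1 : ∑' z, P (Z n ⁻¹' {z}) = 1 := by
        have hdis : Pairwise (Function.onFun Disjoint fun z : ℕ => Z n ⁻¹' {z}) := by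
          intro i j hij
          refine Set.disjoint_left.mpr fun ω hi hj => ?_
          simp only [Set.mem_preimage, Set.mem_singleton_iff] at hi hj
          exact hij (hi ▸ hj ▸ rfl)
        rw [← measure_iUnion hdis fun z => hZmeas n (measurableSet_singleton z)]
        have : (⋃ z : ℕ, Z n ⁻¹' {z}) = Set.univ := by
          ext ω; simp
        rw [this, measure_univ]
      have : ∑' z, ∫⁻ ω, ‖g z ω‖₊ ∂P ≤ 1 := hsum1 ▸ ENNReal.tsum_le_tsum hb1
      exact ne_top_of_le_ne_top (by simp) this
    have hterm : ∀ z, ∫ ω, g z ω ∂P = (P (Z n ⁻¹' {z})).toReal * (F t) ^ z := by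
      intro z
      have hrw : g z = fun ω =>
          ((fun k : ℕ => if k = z then (1:ℝ) else 0) (Z n ω)) *
          ((fun v : ℕ → ℕ => ∏ i ∈ Finset.range z, t ^ v i) ((fun ω i => X n i ω) ω)) := by
        funext ω
        by_cases h : Z n ω = z
        · have hm : ω ∈ Z n ⁻¹' {z} := by simp [h]
          simp [hgdef, Set.indicator_of_mem hm, h]
        · have hm : ω ∉ Z n ⁻¹' {z} := by simp [h]
          simp [hgdef, Set.indicator_of_notMem hm, h]
      have h1m : Measurable fun k : ℕ => if k = z then (1:ℝ) else 0 := measurable_from_nat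
      have h2m : Measurable fun v : ℕ → ℕ => ∏ i ∈ Finset.range z, t ^ v i :=
        Finset.measurable_prod _ fun i _ => measurable_from_nat.comp (measurable_pi_apply i)
      have hXvec : Measurable (fun ω => (fun i => X n i ω : ℕ → ℕ)) :=
        measurable_pi_lambda _ fun i => hXmeas n i
      have hif := ((hZX n).comp h1m h2m).integral_fun_mul_eq_mul_integral
        ((h1m.comp (hZmeas n)).aestronglyMeasurable)
        ((h2m.comp hXvec).aestronglyMeasurable)
      simp only [Function.comp_def] at hif
      rw [hrw, hif]
      have hid : ∫ ω, (if Z n ω = z then (1:ℝ) else 0) ∂P = (P (Z n ⁻¹' {z})).toReal := by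
        have : (fun ω => if Z n ω = z then (1:ℝ) else 0)
            = Set.indicator (Z n ⁻¹' {z}) (fun _ => (1:ℝ)) := by
          funext ω
          by_cases h : Z n ω = z
          · simp [Set.indicator_apply, h]
          · simp [Set.indicator_apply, h]
        rw [this, integral_indicator_const _ (hZmeas n (measurableSet_singleton z))]
        simp [measureReal_def]
      rw [hid, hprod t ht0 ht1 n z]
    rw [hL]
    rw [gw_integral_comp_nat P (Z n) (hZmeas n) (fun z => (F t) ^ z) 1
      (fun k => hpow_bdd (F t) (hF0 t ht0) (hF1 t ht0 ht1) k)]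
    exact tsum_congr hterm
  -- iterated bound on the generating function of Z n
  have hEbound : ∀ n, ∀ t : ℝ, 0 ≤ t → t ≤ 1 →
      ∫ ω, t ^ Z n ω ∂P ≤ (fun u => (1 - q) * u + q * u ^ 2)^[n] t := by
    intro n
    induction n with
    | zero =>
      intro t ht0 ht1
      simp only [Function.iterate_zero, id_eq]
      have h : (fun ω => t ^ Z 0 ω) = fun _ => t := funext fun ω => by rw [hZ0 ω, pow_one]
      rw [h, integral_const]; simp
    | succ n ih =>
      intro t ht0 ht1
      rw [hkey t ht0 ht1 n]
      have hφ0 : 0 ≤ (1 - q) * t + q * t ^ 2 := by nlinarith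
      have hφ1 : (1 - q) * t + q * t ^ 2 ≤ 1 := by
        nlinarith [mul_nonneg (sub_nonneg.2 hq1) (sub_nonneg.2 ht1),
          mul_nonneg hq0.le (show (0:ℝ) ≤ 1 - t ^ 2 by nlinarith)]
      have hmono : ∫ ω, (F t) ^ Z n ω ∂P ≤ ∫ ω, ((1 - q) * t + q * t ^ 2) ^ Z n ω ∂P := by
        refine integral_mono (hint_pow _ (hF0 t ht0) (hF1 t ht0 ht1) _ (hZmeas n))
          (hint_pow _ hφ0 hφ1 _ (hZmeas n)) fun ω => ?_
        exact pow_le_pow_left₀ (hF0 t ht0) (hFφ t ht0 ht1) _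
      refine hmono.trans ?_
      rw [Function.iterate_succ_apply]
      exact ih _ hφ0 hφ1
  -- conclusion
  obtain ⟨K, hKb⟩ := gw_iterate_bound hq0 hq1
  set γ : ℝ := 1 - q / 2 with hγdef
  set s0 : ℝ := 1 - q / 4 with hs0def
  have hγ0 : 0 < γ := by rw [hγdef]; linarith
  have hs00 : 0 < s0 := by rw [hs0def]; linarith
  have hs01 : s0 ≤ 1 := by rw [hs0def]; linarith
  have hγs : γ < s0 := by rw [hγdef, hs0def]; linarith
  refine ⟨1 / γ ^ K, by positivity, Real.log (s0 / γ),
    Real.log_pos (by rw [lt_div_iff₀ hγ0]; linarith), fun n _ => ?_⟩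
  have hAm : MeasurableSet {ω | Z n ω ≤ n} := measurableSet_le (hZmeas n) measurable_const
  have hmark : (P {ω | Z n ω ≤ n}).toReal * s0 ^ n ≤ ∫ ω, s0 ^ Z n ω ∂P := by
    have hle : (fun ω => Set.indicator {ω | Z n ω ≤ n} (fun _ => s0 ^ n) ω)
        ≤ fun ω => s0 ^ Z n ω := by
      intro ω
      show Set.indicator {ω | Z n ω ≤ n} (fun _ => s0 ^ n) ω ≤ s0 ^ Z n ω
      by_cases h : ω ∈ {ω | Z n ω ≤ n}
      · rw [Set.indicator_of_mem h]
        exact pow_le_pow_of_le_one hs00.le hs01 h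
      · rw [Set.indicator_of_notMem h]
        positivity
    calc (P {ω | Z n ω ≤ n}).toReal * s0 ^ n
        = ∫ ω, Set.indicator {ω | Z n ω ≤ n} (fun _ => s0 ^ n) ω ∂P := by
          rw [integral_indicator_const _ hAm, smul_eq_mul, measureReal_def]
      _ ≤ ∫ ω, s0 ^ Z n ω ∂P :=
          integral_mono ((integrable_const _).indicator hAm)
            (hint_pow _ hs00.le hs01 _ (hZmeas n)) hle
  have h2 : ∫ ω, s0 ^ Z n ω ∂P ≤ γ ^ n / γ ^ K :=
    le_trans (hEbound n s0 hs00.le hs01) (hKb n)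
  have hfinal : (P {ω | Z n ω ≤ n}).toReal ≤ (γ ^ n / γ ^ K) / s0 ^ n :=
    (le_div_iff₀ (pow_pos hs00 n)).mpr (hmark.trans h2)
  have hexp : Real.exp (-(Real.log (s0 / γ)) * n) = (γ / s0) ^ n := by
    have h1 : -(Real.log (s0 / γ)) = Real.log (γ / s0) := by
      rw [Real.log_div (ne_of_gt hs00) (ne_of_gt hγ0),
        Real.log_div (ne_of_gt hγ0) (ne_of_gt hs00)]
      ring
    rw [h1, mul_comm, Real.exp_nat_mul, Real.exp_log (div_pos hγ0 hs00)]
  rw [hexp]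
  have heq : (γ ^ n / γ ^ K) / s0 ^ n = (1 / γ ^ K) * (γ / s0) ^ n := by
    rw [div_pow]; ring
  linarith [heq ▸ hfinal]
end

section
/- If Z_1 ≤ m + c₂ almost surely for some constant c₂ > 0, then Condition (B) is satisfied with c = (2^{3/2}/3) max{m, c₂}; that is, E|Z_1 − m|^l ≤ (1/2) l! (l−1)^{−l/2} ((2^{3/2}/3) max{m, c₂})^{l−2} Var(Z_1) for every integer l ≥ 2. (Remark 2.1, item 1.) -/
open MeasureTheory ProbabilityTheory Filter

-- (n+1)^(n+1) ≤ 4 n^(n+1) for n ≥ 1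
lemma auxG : ∀ n : ℕ, 1 ≤ n → ((n : ℝ) + 1) ^ (n + 1) ≤ 4 * (n : ℝ) ^ (n + 1) := by
  intro n hn
  induction n, hn using Nat.le_induction with
  | base => norm_num
  | succ n hn ih =>
    have hn0 : (0:ℝ) < n := by positivity
    -- decreasing: (n+2)^(n+2) * n^(n+1) ≤ (n+1)^(n+2) * (n+1)^(n+1)
    have hD : ((n:ℝ) + 2) ^ (n + 2) * (n:ℝ) ^ (n + 1) ≤
        ((n:ℝ) + 1) ^ (n + 2) * ((n:ℝ) + 1) ^ (n + 1) := by
      have hp : (0:ℝ) < (n:ℝ) * ((n:ℝ) + 2) := by positivity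
      have hber : (1 : ℝ) + (n + 1) * ((n:ℝ) * ((n:ℝ)+2))⁻¹ ≤
          (1 + ((n:ℝ) * ((n:ℝ)+2))⁻¹) ^ (n + 1) := by
        have := one_add_mul_le_pow (a := ((n:ℝ) * ((n:ℝ)+2))⁻¹)
          (le_trans (by norm_num : (-2:ℝ) ≤ 0) (by positivity)) (n+1)
        simpa [mul_comm] using this
      have hkey : ((n:ℝ)*((n:ℝ)+2))^(n+1) * ((1:ℝ) + (n + 1) * ((n:ℝ) * ((n:ℝ)+2))⁻¹) ≤
          (((n:ℝ)+1)^2) ^ (n+1) := by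
        have h1 : (((n:ℝ)+1)^2) = ((n:ℝ)*((n:ℝ)+2)) * (1 + ((n:ℝ) * ((n:ℝ)+2))⁻¹) := by
          field_simp; ring
        have hpn : (0:ℝ) ≤ ((n:ℝ) * ((n:ℝ)+2)) ^ (n+1) := pow_nonneg hp.le _
        calc ((n:ℝ)*((n:ℝ)+2))^(n+1) * ((1:ℝ) + (n + 1) * ((n:ℝ) * ((n:ℝ)+2))⁻¹)
            ≤ ((n:ℝ)*((n:ℝ)+2))^(n+1) * (1 + ((n:ℝ) * ((n:ℝ)+2))⁻¹) ^ (n+1) :=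
              mul_le_mul_of_nonneg_left hber hpn
          _ = (((n:ℝ)*((n:ℝ)+2)) * (1 + ((n:ℝ) * ((n:ℝ)+2))⁻¹)) ^ (n+1) := (mul_pow _ _ _).symm
          _ = (((n:ℝ)+1)^2) ^ (n+1) := by rw [← h1]
      have hq : ((n:ℝ)*((n:ℝ)+2))^(n+1) = ((n:ℝ)+2)^(n+1) * (n:ℝ)^(n+1) := by
        rw [← mul_pow]; ring_nf
      have hs : (((n:ℝ)+1)^2) ^ (n+1) = ((n:ℝ)+1)^(n+2) * ((n:ℝ)+1)^(n+1) / ((n:ℝ)+1) := by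
        rw [← pow_mul, ← pow_add]; field_simp; ring_nf
      -- scalar: (n+2) ≤ (n+1) * (1 + (n+1)/p)
      have hscal : ((n:ℝ) + 2) ≤ ((n:ℝ)+1) * ((1:ℝ) + (n + 1) * ((n:ℝ) * ((n:ℝ)+2))⁻¹) := by
        have h1 : ((n:ℝ)*((n:ℝ)+2)) * ((n:ℝ)*((n:ℝ)+2))⁻¹ = 1 := mul_inv_cancel₀ hp.ne'
        have h2 : (0:ℝ) < ((n:ℝ)*((n:ℝ)+2))⁻¹ := inv_pos.mpr hp
        nlinarith [h1, h2]
      calc ((n:ℝ) + 2) ^ (n + 2) * (n:ℝ) ^ (n + 1)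
          = ((n:ℝ)+2) * (((n:ℝ)*((n:ℝ)+2))^(n+1)) := by rw [hq]; ring
        _ ≤ (((n:ℝ)+1) * ((1:ℝ) + (n + 1) * ((n:ℝ) * ((n:ℝ)+2))⁻¹)) *
              (((n:ℝ)*((n:ℝ)+2))^(n+1)) :=
            mul_le_mul_of_nonneg_right hscal (by positivity)
        _ = ((n:ℝ)+1) * (((n:ℝ)*((n:ℝ)+2))^(n+1) * ((1:ℝ) + (n + 1) * ((n:ℝ) * ((n:ℝ)+2))⁻¹)) := by ring
        _ ≤ ((n:ℝ)+1) * ((((n:ℝ)+1)^2) ^ (n+1)) := mul_le_mul_of_nonneg_left hkey (by positivity)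
        _ = ((n:ℝ) + 1) ^ (n + 2) * ((n:ℝ) + 1) ^ (n + 1) := by
            rw [← pow_mul, ← pow_add]; ring_nf
    -- combine with ih
    have h2 : ((n:ℝ) + 2) ^ (n + 2) * (n:ℝ) ^ (n + 1) ≤
        ((n:ℝ) + 1) ^ (n + 2) * (4 * (n:ℝ) ^ (n + 1)) :=
      hD.trans (mul_le_mul_of_nonneg_left ih (by positivity))
    have hpos : (0:ℝ) < (n:ℝ) ^ (n+1) := by positivity
    have : ((n:ℝ) + 2) ^ (n + 2) ≤ 4 * ((n:ℝ) + 1) ^ (n + 2) := le_of_mul_le_mul_right (by linarith [h2] : ((n:ℝ) + 2) ^ (n + 2) * (n:ℝ) ^ (n + 1) ≤ (4 * ((n:ℝ)+1) ^ (n + 2)) * (n:ℝ) ^ (n+1)) hpos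
    push_cast
    convert this using 2 <;> push_cast <;> ring

-- (l!)^2 (8/9)^(l-2) ≥ 4 (l-1)^l for l ≥ 2
lemma auxK2 : ∀ l : ℕ, 2 ≤ l →
    4 * ((l : ℝ) - 1) ^ l ≤ (l.factorial : ℝ) ^ 2 * ((8:ℝ)/9) ^ (l - 2) := by
  intro l hl
  induction l, hl using Nat.le_induction with
  | base => norm_num [Nat.factorial]
  | succ l hl ih =>
    have hl1 : (1:ℝ) ≤ (l:ℝ) := by exact_mod_cast hl.trans' (by norm_num)
    have hG : ((l:ℝ)) ^ l ≤ 4 * ((l:ℝ) - 1) ^ l := by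
      have := auxG (l - 1) (by omega)
      have hc : ((l - 1 : ℕ) : ℝ) = (l:ℝ) - 1 := by
        have : (1:ℕ) ≤ l := by omega
        push_cast [Nat.cast_sub this]; ring
      rw [hc] at this
      have he : (l - 1) + 1 = l := by omega
      rw [he] at this
      simpa using this
    -- scalar: 9 l ^ (l+1) ≤ 8 (l+1)^2 (l-1)^l
    have hstep : 9 * (l:ℝ) ^ (l + 1) ≤ 8 * ((l:ℝ) + 1) ^ 2 * ((l:ℝ) - 1) ^ l := by
      have h1 : 9 * (l:ℝ) ^ (l + 1) = 9 * (l:ℝ) * (l:ℝ) ^ l := by ring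
      have h2 : 9 * (l:ℝ) * (l:ℝ) ^ l ≤ 9 * (l:ℝ) * (4 * ((l:ℝ) - 1) ^ l) :=
        mul_le_mul_of_nonneg_left hG (by positivity)
      have h3 : (0:ℝ) ≤ ((l:ℝ) - 1) ^ l := by
        apply pow_nonneg; linarith
      have hl2 : (2:ℝ) ≤ (l:ℝ) := by exact_mod_cast hl
      have h4 : 9 * (l:ℝ) * 4 ≤ 8 * ((l:ℝ) + 1) ^ 2 := by nlinarith
      nlinarith [mul_le_mul_of_nonneg_right h4 h3]
    have hfac : ((l+1).factorial : ℝ) = ((l:ℝ) + 1) * (l.factorial : ℝ) := by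
      rw [Nat.factorial_succ]; push_cast; ring
    have he2 : l + 1 - 2 = (l - 2) + 1 := by omega
    rw [hfac, he2]
    have hrhs : (((l:ℝ) + 1) * (l.factorial : ℝ)) ^ 2 * ((8:ℝ)/9) ^ ((l-2) + 1)
        = ((l:ℝ)+1)^2 * (8/9) * ((l.factorial : ℝ)^2 * ((8:ℝ)/9)^(l-2)) := by
      rw [mul_pow, pow_succ]; ring
    rw [hrhs]
    have h5 : ((l:ℝ)+1)^2 * (8/9) * (4 * ((l : ℝ) - 1) ^ l) ≤
        ((l:ℝ)+1)^2 * (8/9) * ((l.factorial : ℝ)^2 * ((8:ℝ)/9)^(l-2)) :=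
      mul_le_mul_of_nonneg_left ih (by positivity)
    refine le_trans ?_ h5
    push_cast
    have hsimp : ((l:ℝ) + 1 - 1) = (l:ℝ) := by ring
    rw [hsimp]
    linarith [hstep]

-- key: 2 √((l-1)^l) ≤ l! * (√8/3)^(l-2)
lemma auxKey (l : ℕ) (hl : 2 ≤ l) :
    2 * Real.sqrt (((l:ℝ) - 1) ^ l) ≤ (l.factorial : ℝ) * (Real.sqrt 8 / 3) ^ (l - 2) := by
  have hl1 : (1:ℝ) ≤ (l:ℝ) := by exact_mod_cast hl.trans' (by norm_num)
  have ha : (0:ℝ) ≤ ((l:ℝ) - 1) ^ l := by apply pow_nonneg; linarith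
  have hLnn : (0:ℝ) ≤ 2 * Real.sqrt (((l:ℝ) - 1) ^ l) := by positivity
  have hRnn : (0:ℝ) ≤ (l.factorial : ℝ) * (Real.sqrt 8 / 3) ^ (l - 2) := by positivity
  refine le_of_pow_le_pow_left₀ (n := 2) two_ne_zero hRnn ?_
  have hs : (Real.sqrt (((l:ℝ) - 1) ^ l)) ^ 2 = ((l:ℝ) - 1) ^ l := Real.sq_sqrt ha
  have h8 : (Real.sqrt 8) ^ 2 = 8 := Real.sq_sqrt (by norm_num)
  have expand : ((l.factorial : ℝ) * (Real.sqrt 8 / 3) ^ (l - 2)) ^ 2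
      = (l.factorial : ℝ) ^ 2 * ((8:ℝ)/9) ^ (l - 2) := by
    rw [mul_pow, ← pow_mul, mul_comm (l-2) 2, pow_mul, div_pow, h8]
    norm_num
  rw [expand, mul_pow, hs]
  have := auxK2 l hl
  linarith

lemma auxOne (l : ℕ) (hl : 2 ≤ l) :
    (1:ℝ) ≤ 1/2 * (l.factorial : ℝ) * ((l:ℝ) - 1) ^ (-(l:ℝ)/2) *
      ((2:ℝ) ^ ((3:ℝ)/2) / 3) ^ (l - 2) := by
  have hl1 : (1:ℝ) ≤ (l:ℝ) - 1 := by
    have : (2:ℝ) ≤ (l:ℝ) := by exact_mod_cast hl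
    linarith
  have ha0 : (0:ℝ) ≤ (l:ℝ) - 1 := by linarith
  have h1 : ((l:ℝ) - 1) ^ (-(l:ℝ)/2) = (Real.sqrt (((l:ℝ) - 1) ^ l))⁻¹ := by
    rw [neg_div, Real.rpow_neg ha0]
    congr 1
    rw [Real.sqrt_eq_rpow, show (l:ℝ)/2 = (l:ℝ) * (1/2) by ring,
      Real.rpow_mul ha0, Real.rpow_natCast]
  have h2 : (2:ℝ) ^ ((3:ℝ)/2) = Real.sqrt 8 := by
    rw [Real.sqrt_eq_rpow, show ((3:ℝ)/2) = (3:ℝ) * (1/2) by ring,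
      Real.rpow_mul (by norm_num : (0:ℝ) ≤ 2)]
    norm_num
  have hsq : 0 < Real.sqrt (((l:ℝ) - 1) ^ l) :=
    Real.sqrt_pos.mpr (by positivity)
  rw [h1, h2]
  have hkey := auxKey l hl
  rw [show (1:ℝ)/2 * (l.factorial : ℝ) * (Real.sqrt (((l:ℝ) - 1) ^ l))⁻¹ *
      (Real.sqrt 8 / 3) ^ (l-2)
    = ((l.factorial : ℝ) * (Real.sqrt 8 / 3) ^ (l-2)) / (2 * Real.sqrt (((l:ℝ) - 1) ^ l)) by
      field_simp]
  rw [le_div_iff₀ (by positivity)]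
  linarith

/-- Remark 2.1, item 1: a bounded offspring law satisfies Condition (B) with
`c = (2^{3/2}/3) max{m, c₂}`. -/
theorem conditionB_of_bounded
    {Ω : Type*} [MeasurableSpace Ω] (P : Measure Ω) [IsProbabilityMeasure P]
    (Z₁ : Ω → ℕ) (hmeas : Measurable Z₁)
    (hp0 : P {ω | Z₁ ω = 0} = 0)
    (m : ℝ) (hm : m = ∫ ω, (Z₁ ω : ℝ) ∂P) (hm1 : 1 < m)
    (hL2 : MemLp (fun ω => (Z₁ ω : ℝ)) 2 P)
    (hvar : 0 < variance (fun ω => (Z₁ ω : ℝ)) P)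
    (c₂ : ℝ) (hc₂ : 0 < c₂) (hbdd : ∀ᵐ ω ∂P, (Z₁ ω : ℝ) ≤ m + c₂) :
    ∀ l : ℕ, 2 ≤ l →
      ∫ ω, |(Z₁ ω : ℝ) - m| ^ l ∂P ≤
        (1 / 2) * (Nat.factorial l) * ((l : ℝ) - 1) ^ (-(l : ℝ) / 2) *
          ((2 : ℝ) ^ ((3 : ℝ) / 2) / 3 * max m c₂) ^ (l - 2) *
          variance (fun ω => (Z₁ ω : ℝ)) P := by
  intro l hl
  set X : Ω → ℝ := fun ω => (Z₁ ω : ℝ) with hX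
  set M : ℝ := max m c₂ with hMdef
  have hM0 : 0 < M := lt_of_lt_of_le hc₂ (le_max_right m c₂)
  have hmM : m ≤ M := le_max_left m c₂
  have hc₂M : c₂ ≤ M := le_max_right m c₂
  have habs : ∀ᵐ ω ∂P, |X ω - m| ≤ M := by
    filter_upwards [hbdd] with ω h
    have h0 : (0:ℝ) ≤ X ω := Nat.cast_nonneg _
    rw [abs_le]
    constructor <;> [linarith; linarith]
  have hXmeas : Measurable X := measurable_from_nat.comp hmeas
  have hXm : MemLp (fun ω => X ω - m) 2 P := hL2.sub (memLp_const m)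
  have hint2 : Integrable (fun ω => (X ω - m)^2) P := hXm.integrable_sq
  have hvar_eq : variance X P = ∫ ω, (X ω - m)^2 ∂P := by
    rw [variance_eq_integral hXmeas.aemeasurable, ← hm]
  have hint_l : Integrable (fun ω => |X ω - m|^l) P := by
    refine (integrable_const (M ^ l)).mono' ?_ ?_
    · exact (((hXmeas.sub measurable_const).abs.pow measurable_const)).aestronglyMeasurable
    · filter_upwards [habs] with ω h
      rw [Real.norm_eq_abs, abs_of_nonneg (by positivity)]
      exact pow_le_pow_left₀ (abs_nonneg _) h l
  have hptwise : ∀ᵐ ω ∂P, |X ω - m|^l ≤ M^(l-2) * (X ω - m)^2 := by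
    filter_upwards [habs] with ω h
    have hsplit : |X ω - m|^l = |X ω - m|^(l-2) * |X ω - m|^2 := by
      rw [← pow_add]
      congr 1
      omega
    rw [hsplit, sq_abs]
    exact mul_le_mul_of_nonneg_right (pow_le_pow_left₀ (abs_nonneg _) h _) (sq_nonneg _)
  have step1 : ∫ ω, |X ω - m|^l ∂P ≤ M^(l-2) * variance X P := by
    calc ∫ ω, |X ω - m|^l ∂P ≤ ∫ ω, M^(l-2) * (X ω - m)^2 ∂P :=
          integral_mono_ae hint_l (hint2.const_mul _) hptwise
      _ = M^(l-2) * ∫ ω, (X ω - m)^2 ∂P := integral_const_mul _ _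
      _ = M^(l-2) * variance X P := by rw [hvar_eq]
  refine step1.trans ?_
  have hone := auxOne l hl
  have hnn : (0:ℝ) ≤ M^(l-2) * variance X P := by positivity
  have := mul_le_mul_of_nonneg_right hone hnn
  rw [one_mul] at this
  refine this.trans_eq ?_
  rw [mul_pow]
  ring
end

section
/- For every integer l ≥ 2, the double factorial satisfies (l−1)!! ≤ √(l!) and √(l!) ≤ l! (l−1)^{−l/2} 2^{l−2}; in particular (l−1)!! ≤ l! (l−1)^{−l/2} 2^{l−2}. -/
lemma df_mono : ∀ n : ℕ, Nat.doubleFactorial n ≤ Nat.doubleFactorial (n + 1)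
  | 0 => le_refl 1
  | 1 => by simp [Nat.doubleFactorial]
  | (n + 2) => by
      rw [Nat.doubleFactorial_add_two, show n + 2 + 1 = n + 1 + 2 from rfl,
        Nat.doubleFactorial_add_two]
      exact Nat.mul_le_mul (by omega) (df_mono n)

lemma df_sq_le (n : ℕ) : (Nat.doubleFactorial n) ^ 2 ≤ Nat.factorial (n + 1) := by
  rw [Nat.factorial_eq_mul_doubleFactorial, sq]
  exact Nat.mul_le_mul_right _ (df_mono n)

lemma pow_self_le (m : ℕ) (hm : 1 ≤ m) :
    (m : ℝ) ^ m ≤ (Nat.factorial m : ℝ) * 4 ^ (m - 1) := by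
  induction m with
  | zero => omega
  | succ n ih =>
    rcases Nat.eq_or_lt_of_le hm with h | h
    · simp [← h]
    · have hn : 1 ≤ n := by omega
      have ih' := ih hn
      have hnpos : (0 : ℝ) < n := by positivity
      have key : ((n : ℝ) + 1) ^ n ≤ 4 * (n : ℝ) ^ n := by
        have h1 : (n : ℝ) + 1 ≤ (n : ℝ) * Real.exp (1 / n) := by
          have := Real.add_one_le_exp (1 / (n : ℝ))
          calc (n : ℝ) + 1 = (n : ℝ) * (1 / n + 1) := by field_simp; ring
            _ ≤ (n : ℝ) * Real.exp (1 / n) := by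
                exact mul_le_mul_of_nonneg_left this (le_of_lt hnpos)
        have h2 : ((n : ℝ) + 1) ^ n ≤ ((n : ℝ) * Real.exp (1 / n)) ^ n :=
          pow_le_pow_left₀ (by positivity) h1 n
        have h3 : ((n : ℝ) * Real.exp (1 / n)) ^ n = (n : ℝ) ^ n * Real.exp 1 := by
          rw [mul_pow, ← Real.exp_nat_mul]
          congr 2
          field_simp
        have h4 : Real.exp 1 ≤ 4 := by
          have := Real.exp_one_lt_d9
          linarith
        calc ((n : ℝ) + 1) ^ n ≤ (n : ℝ) ^ n * Real.exp 1 := by rw [← h3]; exact h2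
          _ ≤ (n : ℝ) ^ n * 4 := by
              exact mul_le_mul_of_nonneg_left h4 (by positivity)
          _ = 4 * (n : ℝ) ^ n := by ring
      have hfact : (Nat.factorial (n + 1) : ℝ) = ((n : ℝ) + 1) * Nat.factorial n := by
        push_cast [Nat.factorial_succ]; ring
      have hsub : n + 1 - 1 = n := rfl
      rw [hsub, hfact]
      calc ((n + 1 : ℕ) : ℝ) ^ (n + 1) = ((n : ℝ) + 1) * ((n : ℝ) + 1) ^ n := by
            push_cast; ring
        _ ≤ ((n : ℝ) + 1) * (4 * (n : ℝ) ^ n) :=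
            mul_le_mul_of_nonneg_left key (by positivity)
        _ ≤ ((n : ℝ) + 1) * (4 * ((Nat.factorial n : ℝ) * 4 ^ (n - 1))) :=
            mul_le_mul_of_nonneg_left
              (mul_le_mul_of_nonneg_left ih' (by norm_num)) (by positivity)
        _ = ((n : ℝ) + 1) * Nat.factorial n * (4 * 4 ^ (n - 1)) := by ring
        _ = ((n : ℝ) + 1) * Nat.factorial n * 4 ^ n := by
            rw [← pow_succ']
            congr 2
            omega

lemma keyB (l : ℕ) (hl : 2 ≤ l) :
    ((l : ℝ) - 1) ^ l ≤ (Nat.factorial l : ℝ) * 4 ^ (l - 2) := by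
  obtain ⟨m, rfl⟩ : ∃ m, l = m + 1 := ⟨l - 1, by omega⟩
  have hm : 1 ≤ m := by omega
  have h1 := pow_self_le m hm
  have hc : ((m + 1 : ℕ) : ℝ) - 1 = (m : ℝ) := by push_cast; ring
  rw [hc]
  have hsub : m + 1 - 2 = m - 1 := by omega
  rw [hsub]
  have hfact : (Nat.factorial (m + 1) : ℝ) = ((m : ℝ) + 1) * Nat.factorial m := by
    push_cast [Nat.factorial_succ]; ring
  rw [hfact]
  calc (m : ℝ) ^ (m + 1) = (m : ℝ) * (m : ℝ) ^ m := by ring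
    _ ≤ ((m : ℝ) + 1) * ((Nat.factorial m : ℝ) * 4 ^ (m - 1)) := by
        have hmpos : (0 : ℝ) ≤ m := by positivity
        have : (m : ℝ) ^ m ≤ (Nat.factorial m : ℝ) * 4 ^ (m - 1) := h1
        nlinarith [pow_nonneg hmpos m]
    _ = ((m : ℝ) + 1) * Nat.factorial m * 4 ^ (m - 1) := by ring

/-- Double factorial bounds: `(l−1)!! ≤ √(l!)` and `√(l!) ≤ l! (l−1)^{−l/2} 2^{l−2}`;
in particular `(l−1)!! ≤ l! (l−1)^{−l/2} 2^{l−2}`. -/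
theorem doubleFactorial_le_bounds :
    ∀ l : ℕ, 2 ≤ l →
      ((Nat.doubleFactorial (l - 1) : ℝ) ≤ Real.sqrt (Nat.factorial l)) ∧
      (Real.sqrt (Nat.factorial l) ≤
        (Nat.factorial l : ℝ) * ((l : ℝ) - 1) ^ (-(l : ℝ) / 2) * 2 ^ (l - 2)) ∧
      ((Nat.doubleFactorial (l - 1) : ℝ) ≤
        (Nat.factorial l : ℝ) * ((l : ℝ) - 1) ^ (-(l : ℝ) / 2) * 2 ^ (l - 2)) := by
  intro l hl
  have hc1 : (1 : ℝ) ≤ (l : ℝ) - 1 := by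
    have : (2 : ℝ) ≤ l := by exact_mod_cast hl
    linarith
  have hcpos : (0 : ℝ) < (l : ℝ) - 1 := by linarith
  have hfpos : (0 : ℝ) < (Nat.factorial l : ℝ) := by
    exact_mod_cast Nat.factorial_pos l
  -- Part 1
  have part1 : (Nat.doubleFactorial (l - 1) : ℝ) ≤ Real.sqrt (Nat.factorial l) := by
    rw [show (Nat.doubleFactorial (l - 1) : ℝ) =
        Real.sqrt ((Nat.doubleFactorial (l - 1) : ℝ) ^ 2) from
        (Real.sqrt_sq (by positivity)).symm]
    apply Real.sqrt_le_sqrt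
    have := df_sq_le (l - 1)
    have h' : l - 1 + 1 = l := by omega
    rw [h'] at this
    exact_mod_cast this
  -- Part 2
  have part2 : Real.sqrt (Nat.factorial l) ≤
      (Nat.factorial l : ℝ) * ((l : ℝ) - 1) ^ (-(l : ℝ) / 2) * 2 ^ (l - 2) := by
    have hrpow : ((l : ℝ) - 1) ^ (-(l : ℝ) / 2) =
        (Real.sqrt (((l : ℝ) - 1) ^ l))⁻¹ := by
      rw [show -(l : ℝ) / 2 = -((l : ℝ) * (1 / 2)) by ring,
        Real.rpow_neg (le_of_lt hcpos), Real.rpow_mul (le_of_lt hcpos),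
        Real.rpow_natCast, Real.sqrt_eq_rpow]
    rw [hrpow]
    have hsq : (0 : ℝ) < Real.sqrt (((l : ℝ) - 1) ^ l) := by
      apply Real.sqrt_pos.mpr
      positivity
    have H : Real.sqrt (Nat.factorial l) * Real.sqrt (((l : ℝ) - 1) ^ l) ≤
        (Nat.factorial l : ℝ) * 2 ^ (l - 2) := by
      calc Real.sqrt (Nat.factorial l) * Real.sqrt (((l : ℝ) - 1) ^ l)
          = Real.sqrt ((Nat.factorial l : ℝ) * ((l : ℝ) - 1) ^ l) := by
            rw [← Real.sqrt_mul (le_of_lt hfpos)]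
        _ ≤ Real.sqrt (((Nat.factorial l : ℝ) * 2 ^ (l - 2)) ^ 2) := by
            apply Real.sqrt_le_sqrt
            have hb := keyB l hl
            have h4 : ((4 : ℝ)) ^ (l - 2) = ((2 : ℝ) ^ (l - 2)) ^ 2 := by
              rw [← pow_mul, show (4 : ℝ) = 2 ^ 2 by norm_num, ← pow_mul]
              ring_nf
            calc (Nat.factorial l : ℝ) * ((l : ℝ) - 1) ^ l
                ≤ (Nat.factorial l : ℝ) * ((Nat.factorial l : ℝ) * 4 ^ (l - 2)) :=
                  mul_le_mul_of_nonneg_left hb (le_of_lt hfpos)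
              _ = ((Nat.factorial l : ℝ) * 2 ^ (l - 2)) ^ 2 := by rw [h4]; ring
        _ = (Nat.factorial l : ℝ) * 2 ^ (l - 2) := Real.sqrt_sq (by positivity)
    calc Real.sqrt (Nat.factorial l)
        ≤ ((Nat.factorial l : ℝ) * 2 ^ (l - 2)) / Real.sqrt (((l : ℝ) - 1) ^ l) :=
          (le_div_iff₀ hsq).mpr H
      _ = (Nat.factorial l : ℝ) * (Real.sqrt (((l : ℝ) - 1) ^ l))⁻¹ * 2 ^ (l - 2) := by
          rw [div_eq_mul_inv]; ring
  exact ⟨part1, part2, le_trans part1 part2⟩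
end
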